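/- Since α > 2, the integral ∫₀^∞ C_DL(2^x − 1) dx is finite, where C_DL is viewed as a function of the SIR threshold with all other parameters fixed. (Hence the mean downlink Shannon rate of the typical user, and therefore the effective data rate T = λ_b ∫₀^∞ C_DL(2^x − 1) dx / (ν λ_u P_DL) of Theorem 4, is finite.) -/

import Mathlib

open MeasureTheory Real Set Filter

noncomputable def A (rho mu : ℝ) : ℝ :=
  ∫ u in (0:ℝ)..rho, (1 - Real.exp (-2 * mu * Real.sqrt (rho ^ 2 - u ^ 2)))

noncomputable def P_SL (lamL mu rho : ℝ) : ℝ := 1 - Real.exp (-2 * lamL * A rho mu)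

noncomputable def P_DL (lamL mu rho : ℝ) : ℝ := Real.exp (-2 * lamL * A rho mu)

noncomputable def K1 (tau alpha x : ℝ) : ℝ :=
  x ^ 2 + 2 * ∫ r in Set.Ioi x,
    tau * x ^ alpha * r ^ (1 - alpha) / (1 + tau * x ^ alpha * r ^ (-alpha))

noncomputable def K2 (mu rho alpha eta tau x : ℝ) : ℝ :=
  ∫ r in (0:ℝ)..rho,
    (1 - Real.exp (-2 * mu * Real.sqrt (rho ^ 2 - r ^ 2)
      - 2 * mu * ∫ u in Set.Ioi (Real.sqrt (rho ^ 2 - r ^ 2)),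
          tau * x ^ alpha * eta * (r ^ 2 + u ^ 2) ^ (-(alpha / 2)) /
            (1 + tau * x ^ alpha * eta * (r ^ 2 + u ^ 2) ^ (-(alpha / 2)))))

noncomputable def K3 (mu rho alpha eta tau x : ℝ) : ℝ :=
  ∫ r in Set.Ioi rho,
    (1 - Real.exp (-2 * mu * ∫ u in Set.Ioi (0:ℝ),
        tau * x ^ alpha * eta * (r ^ 2 + u ^ 2) ^ (-(alpha / 2)) /
          (1 + tau * x ^ alpha * eta * (r ^ 2 + u ^ 2) ^ (-(alpha / 2)))))

noncomputable def C_DL (lamB lamL mu rho alpha eta tau : ℝ) : ℝ :=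
  ∫ x in Set.Ioi (0:ℝ),
    2 * Real.pi * lamB * x *
      Real.exp (-(Real.pi * lamB * K1 tau alpha x) - 2 * lamL * K2 mu rho alpha eta tau x
        - 2 * lamL * K3 mu rho alpha eta tau x)


lemma gauss_val {b : ℝ} (hb : 0 < b) :
    ∫ r in Set.Ioi (0:ℝ), r * Real.exp (-b * r ^ 2) = (2 * b)⁻¹ := by
  have A : ∀ x : ℝ, HasDerivAt (fun y : ℝ => -(2 * b)⁻¹ * Real.exp (-b * y ^ 2))
      (x * Real.exp (-b * x ^ 2)) x := by
    intro x
    convert (((hasDerivAt_pow 2 x).const_mul (-b)).exp.const_mul (-(2 * b)⁻¹)) using 1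
    · rfl
    · rfl
    field_simp
    ring
  have B : Tendsto (fun y : ℝ ↦ -(2 * b)⁻¹ * Real.exp (-b * y ^ 2)) atTop
      (nhds (-(2 * b)⁻¹ * 0)) := by
    refine Tendsto.const_mul _ ?_
    exact Real.tendsto_exp_atBot.comp
      ((tendsto_pow_atTop two_ne_zero).const_mul_atTop_of_neg (neg_lt_zero.2 hb))
  have := integral_Ioi_of_hasDerivAt_of_tendsto' (a := (0:ℝ)) (fun x _ => A x)
    (integrable_mul_exp_neg_mul_sq hb).integrableOn B
  rw [this]
  simp

lemma measurable_K1 (alpha : ℝ) : Measurable (fun p : ℝ × ℝ => K1 p.1 alpha p.2) := by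
  have hF : Measurable (fun q : (ℝ × ℝ) × ℝ =>
      (Set.Ioi q.1.2).indicator (fun r =>
        q.1.1 * q.1.2 ^ alpha * r ^ (1 - alpha) / (1 + q.1.1 * q.1.2 ^ alpha * r ^ (-alpha))) q.2) := by
    have hset : MeasurableSet {q : (ℝ × ℝ) × ℝ | q.1.2 < q.2} :=
      measurableSet_lt (measurable_fst.snd) measurable_snd
    have hf : Measurable (fun q : (ℝ × ℝ) × ℝ =>
        q.1.1 * q.1.2 ^ alpha * q.2 ^ (1 - alpha) / (1 + q.1.1 * q.1.2 ^ alpha * q.2 ^ (-alpha))) := by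
      fun_prop
    simpa [Set.indicator, Set.mem_Ioi] using hf.ite hset measurable_const
  have key : Measurable (fun p : ℝ × ℝ => ∫ r, (Set.Ioi p.2).indicator (fun r =>
      p.1 * p.2 ^ alpha * r ^ (1 - alpha) / (1 + p.1 * p.2 ^ alpha * r ^ (-alpha))) r) := by
    exact (StronglyMeasurable.integral_prod_right'
      (f := fun q : (ℝ × ℝ) × ℝ => (Set.Ioi q.1.2).indicator (fun r =>
        q.1.1 * q.1.2 ^ alpha * r ^ (1 - alpha) / (1 + q.1.1 * q.1.2 ^ alpha * r ^ (-alpha))) q.2)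
      hF.stronglyMeasurable).measurable
  have : (fun p : ℝ × ℝ => K1 p.1 alpha p.2) = fun p =>
      p.2 ^ 2 + 2 * ∫ r, (Set.Ioi p.2).indicator (fun r =>
        p.1 * p.2 ^ alpha * r ^ (1 - alpha) / (1 + p.1 * p.2 ^ alpha * r ^ (-alpha))) r := by
    ext p
    rw [K1, integral_indicator measurableSet_Ioi]
  rw [this]
  exact ((measurable_snd.pow_const 2).add (key.const_mul 2))

lemma indicator_comp_eq {α : Type*} (g : α → ℝ → ℝ) (pr : α → ℝ) (s : Set ℝ) :
    (fun a => s.indicator (g a) (pr a)) = fun a => (pr ⁻¹' s).indicator (fun a => g a (pr a)) a := by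
  ext a
  by_cases h : pr a ∈ s <;> simp [Set.indicator_apply, h]

lemma measurable_inner2 (alpha eta : ℝ) {b : ℝ → ℝ} (hb : Measurable b) :
    Measurable (fun q : (ℝ × ℝ) × ℝ =>
      ∫ u in Set.Ioi (b q.2),
        q.1.1 * q.1.2 ^ alpha * eta * (q.2 ^ 2 + u ^ 2) ^ (-(alpha / 2)) /
          (1 + q.1.1 * q.1.2 ^ alpha * eta * (q.2 ^ 2 + u ^ 2) ^ (-(alpha / 2)))) := by
  have hset : MeasurableSet {w : ((ℝ × ℝ) × ℝ) × ℝ | b w.1.2 < w.2} :=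
    measurableSet_lt (hb.comp (measurable_fst.snd)) measurable_snd
  have hf : Measurable (fun w : ((ℝ × ℝ) × ℝ) × ℝ =>
      w.1.1.1 * w.1.1.2 ^ alpha * eta * (w.1.2 ^ 2 + w.2 ^ 2) ^ (-(alpha / 2)) /
        (1 + w.1.1.1 * w.1.1.2 ^ alpha * eta * (w.1.2 ^ 2 + w.2 ^ 2) ^ (-(alpha / 2)))) := by
    fun_prop
  have hF : Measurable (fun w : ((ℝ × ℝ) × ℝ) × ℝ =>
      (Set.Ioi (b w.1.2)).indicator (fun u =>
        w.1.1.1 * w.1.1.2 ^ alpha * eta * (w.1.2 ^ 2 + u ^ 2) ^ (-(alpha / 2)) /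
          (1 + w.1.1.1 * w.1.1.2 ^ alpha * eta * (w.1.2 ^ 2 + u ^ 2) ^ (-(alpha / 2)))) w.2) := by
    simpa [Set.indicator, Set.mem_Ioi] using hf.ite hset measurable_const
  have key := (StronglyMeasurable.integral_prod_right' (ν := (volume : Measure ℝ))
      (f := fun w : ((ℝ × ℝ) × ℝ) × ℝ =>
        (Set.Ioi (b w.1.2)).indicator (fun u =>
          w.1.1.1 * w.1.1.2 ^ alpha * eta * (w.1.2 ^ 2 + u ^ 2) ^ (-(alpha / 2)) /
            (1 + w.1.1.1 * w.1.1.2 ^ alpha * eta * (w.1.2 ^ 2 + u ^ 2) ^ (-(alpha / 2)))) w.2)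
      hF.stronglyMeasurable).measurable
  have eq : (fun q : (ℝ × ℝ) × ℝ =>
      ∫ u in Set.Ioi (b q.2),
        q.1.1 * q.1.2 ^ alpha * eta * (q.2 ^ 2 + u ^ 2) ^ (-(alpha / 2)) /
          (1 + q.1.1 * q.1.2 ^ alpha * eta * (q.2 ^ 2 + u ^ 2) ^ (-(alpha / 2))))
      = fun q : (ℝ × ℝ) × ℝ => ∫ u, (Set.Ioi (b q.2)).indicator (fun u =>
        q.1.1 * q.1.2 ^ alpha * eta * (q.2 ^ 2 + u ^ 2) ^ (-(alpha / 2)) /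
          (1 + q.1.1 * q.1.2 ^ alpha * eta * (q.2 ^ 2 + u ^ 2) ^ (-(alpha / 2)))) u := by
    ext q
    rw [integral_indicator measurableSet_Ioi]
  rw [eq]
  exact key

lemma measurable_K2 (mu rho alpha eta : ℝ) (hrho : 0 < rho) :
    Measurable (fun p : ℝ × ℝ => K2 mu rho alpha eta p.1 p.2) := by
  have hinner := measurable_inner2 alpha eta
    (b := fun r => Real.sqrt (rho ^ 2 - r ^ 2)) (by fun_prop)
  have hg : Measurable (fun q : (ℝ × ℝ) × ℝ =>
      (1 - Real.exp (-2 * mu * Real.sqrt (rho ^ 2 - q.2 ^ 2)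
        - 2 * mu * ∫ u in Set.Ioi (Real.sqrt (rho ^ 2 - q.2 ^ 2)),
          q.1.1 * q.1.2 ^ alpha * eta * (q.2 ^ 2 + u ^ 2) ^ (-(alpha / 2)) /
            (1 + q.1.1 * q.1.2 ^ alpha * eta * (q.2 ^ 2 + u ^ 2) ^ (-(alpha / 2)))))) := by
    refine measurable_const.sub (Real.measurable_exp.comp ?_)
    refine Measurable.sub (by fun_prop) (hinner.const_mul _)
  have hF : Measurable (fun q : (ℝ × ℝ) × ℝ =>
      (Set.Ioc (0:ℝ) rho).indicator (fun r =>
        (1 - Real.exp (-2 * mu * Real.sqrt (rho ^ 2 - r ^ 2)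
          - 2 * mu * ∫ u in Set.Ioi (Real.sqrt (rho ^ 2 - r ^ 2)),
            q.1.1 * q.1.2 ^ alpha * eta * (r ^ 2 + u ^ 2) ^ (-(alpha / 2)) /
              (1 + q.1.1 * q.1.2 ^ alpha * eta * (r ^ 2 + u ^ 2) ^ (-(alpha / 2)))))) q.2) := by
    rw [indicator_comp_eq]
    exact hg.indicator (measurable_snd measurableSet_Ioc)
  have key := (StronglyMeasurable.integral_prod_right' (ν := (volume : Measure ℝ))
      hF.stronglyMeasurable).measurable
  have eq : (fun p : ℝ × ℝ => K2 mu rho alpha eta p.1 p.2)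
      = fun p : ℝ × ℝ => ∫ r, (Set.Ioc (0:ℝ) rho).indicator (fun r =>
        (1 - Real.exp (-2 * mu * Real.sqrt (rho ^ 2 - r ^ 2)
          - 2 * mu * ∫ u in Set.Ioi (Real.sqrt (rho ^ 2 - r ^ 2)),
            p.1 * p.2 ^ alpha * eta * (r ^ 2 + u ^ 2) ^ (-(alpha / 2)) /
              (1 + p.1 * p.2 ^ alpha * eta * (r ^ 2 + u ^ 2) ^ (-(alpha / 2)))))) r := by
    ext p
    rw [K2, intervalIntegral.integral_of_le hrho.le, integral_indicator measurableSet_Ioc]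
  rw [eq]
  exact key

lemma measurable_K3 (mu rho alpha eta : ℝ) :
    Measurable (fun p : ℝ × ℝ => K3 mu rho alpha eta p.1 p.2) := by
  have hinner := measurable_inner2 alpha eta (b := fun _ => (0:ℝ)) measurable_const
  have hg : Measurable (fun q : (ℝ × ℝ) × ℝ =>
      (1 - Real.exp (-2 * mu * ∫ u in Set.Ioi (0:ℝ),
          q.1.1 * q.1.2 ^ alpha * eta * (q.2 ^ 2 + u ^ 2) ^ (-(alpha / 2)) /
            (1 + q.1.1 * q.1.2 ^ alpha * eta * (q.2 ^ 2 + u ^ 2) ^ (-(alpha / 2)))))) := by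
    exact measurable_const.sub (Real.measurable_exp.comp (hinner.const_mul _))
  have hF : Measurable (fun q : (ℝ × ℝ) × ℝ =>
      (Set.Ioi rho).indicator (fun r =>
        (1 - Real.exp (-2 * mu * ∫ u in Set.Ioi (0:ℝ),
          q.1.1 * q.1.2 ^ alpha * eta * (r ^ 2 + u ^ 2) ^ (-(alpha / 2)) /
            (1 + q.1.1 * q.1.2 ^ alpha * eta * (r ^ 2 + u ^ 2) ^ (-(alpha / 2)))))) q.2) := by
    rw [indicator_comp_eq]
    exact hg.indicator (measurable_snd measurableSet_Ioi)
  have key := (StronglyMeasurable.integral_prod_right' (ν := (volume : Measure ℝ))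
      hF.stronglyMeasurable).measurable
  have eq : (fun p : ℝ × ℝ => K3 mu rho alpha eta p.1 p.2)
      = fun p : ℝ × ℝ => ∫ r, (Set.Ioi rho).indicator (fun r =>
        (1 - Real.exp (-2 * mu * ∫ u in Set.Ioi (0:ℝ),
          p.1 * p.2 ^ alpha * eta * (r ^ 2 + u ^ 2) ^ (-(alpha / 2)) /
            (1 + p.1 * p.2 ^ alpha * eta * (r ^ 2 + u ^ 2) ^ (-(alpha / 2)))))) r := by
    ext p
    rw [K3, integral_indicator measurableSet_Ioi]
  rw [eq]
  exact key

lemma measurable_CDL (lamB lamL mu rho alpha eta : ℝ) (hrho : 0 < rho) :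
    Measurable (fun tau : ℝ => C_DL lamB lamL mu rho alpha eta tau) := by
  have hG : Measurable (fun p : ℝ × ℝ =>
      2 * Real.pi * lamB * p.2 *
        Real.exp (-(Real.pi * lamB * K1 p.1 alpha p.2) - 2 * lamL * K2 mu rho alpha eta p.1 p.2
          - 2 * lamL * K3 mu rho alpha eta p.1 p.2)) := by
    refine (measurable_snd.const_mul _).mul (Real.measurable_exp.comp ?_)
    exact (((measurable_K1 alpha).const_mul _).neg.sub
        ((measurable_K2 mu rho alpha eta hrho).const_mul _)).sub
        ((measurable_K3 mu rho alpha eta).const_mul _)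
  have hF : Measurable (fun p : ℝ × ℝ =>
      (Set.Ioi (0:ℝ)).indicator (fun x =>
        2 * Real.pi * lamB * x *
          Real.exp (-(Real.pi * lamB * K1 p.1 alpha x) - 2 * lamL * K2 mu rho alpha eta p.1 x
            - 2 * lamL * K3 mu rho alpha eta p.1 x)) p.2) := by
    rw [indicator_comp_eq]
    exact hG.indicator (measurable_snd measurableSet_Ioi)
  have key := (StronglyMeasurable.integral_prod_right' (ν := (volume : Measure ℝ))
      hF.stronglyMeasurable).measurable
  have eq : (fun tau : ℝ => C_DL lamB lamL mu rho alpha eta tau)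
      = fun tau : ℝ => ∫ x, (Set.Ioi (0:ℝ)).indicator (fun x =>
        2 * Real.pi * lamB * x *
          Real.exp (-(Real.pi * lamB * K1 tau alpha x) - 2 * lamL * K2 mu rho alpha eta tau x
            - 2 * lamL * K3 mu rho alpha eta tau x)) x := by
    ext tau
    rw [C_DL, integral_indicator measurableSet_Ioi]
  rw [eq]
  exact key

lemma K1_integrand_nonneg {tau alpha x : ℝ} (htau : 0 ≤ tau) (hx : 0 < x) {r : ℝ} (hr : x < r) :
    0 ≤ tau * x ^ alpha * r ^ (1 - alpha) / (1 + tau * x ^ alpha * r ^ (-alpha)) := by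
  have hr0 : 0 < r := hx.trans hr
  have h1 : 0 ≤ tau * x ^ alpha * r ^ (1 - alpha) := by positivity
  have h2 : 0 ≤ tau * x ^ alpha * r ^ (-alpha) := by positivity
  positivity

lemma K1_int (tau alpha x : ℝ) (htau : 0 ≤ tau) (halpha : 2 < alpha) (hx : 0 < x) :
    IntegrableOn (fun r : ℝ =>
      tau * x ^ alpha * r ^ (1 - alpha) / (1 + tau * x ^ alpha * r ^ (-alpha))) (Set.Ioi x) := by
  have hbig : IntegrableOn (fun r : ℝ => tau * x ^ alpha * r ^ (1 - alpha)) (Set.Ioi x) :=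
    (integrableOn_Ioi_rpow_of_lt (by linarith) hx).const_mul _
  have hm : Measurable (fun r : ℝ =>
      tau * x ^ alpha * r ^ (1 - alpha) / (1 + tau * x ^ alpha * r ^ (-alpha))) := by fun_prop
  refine Integrable.mono' hbig hm.aestronglyMeasurable ?_
  filter_upwards [ae_restrict_mem measurableSet_Ioi] with r hr
  have hr0 : 0 < r := hx.trans hr
  have h1 : 0 ≤ tau * x ^ alpha * r ^ (1 - alpha) := by positivity
  have h2 : 0 ≤ tau * x ^ alpha * r ^ (-alpha) := by positivity
  rw [Real.norm_eq_abs, abs_of_nonneg (by positivity)]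
  exact div_le_self h1 (by linarith)

lemma K1_ge_sq {tau alpha x : ℝ} (htau : 0 ≤ tau) (hx : 0 < x) :
    x ^ 2 ≤ K1 tau alpha x := by
  rw [K1]
  have h : 0 ≤ ∫ r in Set.Ioi x,
      tau * x ^ alpha * r ^ (1 - alpha) / (1 + tau * x ^ alpha * r ^ (-alpha)) :=
    setIntegral_nonneg measurableSet_Ioi fun r hr => K1_integrand_nonneg htau hx hr
  linarith

lemma K1_lower {tau alpha x : ℝ} (htau : 1 ≤ tau) (halpha : 2 < alpha) (hx : 0 < x) :
    x ^ 2 * tau ^ (2 / alpha) / 2 ≤ K1 tau alpha x := by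
  have htau0 : (0:ℝ) < tau := lt_of_lt_of_le one_pos htau
  have halpha0 : (0:ℝ) < alpha := by linarith
  set s : ℝ := tau ^ (alpha⁻¹) with hs
  have hs1 : 1 ≤ s := Real.one_le_rpow htau (by positivity)
  have hs0 : 0 < s := lt_of_lt_of_le one_pos hs1
  have hxsx : x ≤ s * x := le_mul_of_one_le_left hx.le hs1
  set f : ℝ → ℝ := fun r =>
    tau * x ^ alpha * r ^ (1 - alpha) / (1 + tau * x ^ alpha * r ^ (-alpha)) with hf
  have hint : IntegrableOn f (Set.Ioi x) := K1_int tau alpha x htau0.le halpha hx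
  -- pointwise bound on Ioc x (s*x)
  have hptw : ∀ r ∈ Set.Ioc x (s * x), r / 2 ≤ f r := by
    intro r hr
    have hr0 : 0 < r := hx.trans hr.1
    have hu1 : 1 ≤ tau * x ^ alpha * r ^ (-alpha) := by
      have h1 : r ^ (-alpha) ≥ (s * x) ^ (-alpha) :=
        Real.rpow_le_rpow_of_nonpos hr0 hr.2 (by linarith)
      have h2 : (s * x) ^ (-alpha) = s ^ (-alpha) * x ^ (-alpha) :=
        Real.mul_rpow hs0.le hx.le
      have h3 : s ^ (-alpha) = tau⁻¹ := by
        rw [hs, ← Real.rpow_mul htau0.le]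
        have : alpha⁻¹ * -alpha = -1 := by field_simp
        rw [this, Real.rpow_neg_one]
      have h4 : x ^ alpha * x ^ (-alpha) = 1 := by
        rw [← Real.rpow_add hx]
        simp
      have h5 : tau * x ^ alpha * (s * x) ^ (-alpha) = 1 := by
        rw [h2, h3]
        field_simp
        nlinarith [h4]
      calc (1:ℝ) = tau * x ^ alpha * (s * x) ^ (-alpha) := h5.symm
        _ ≤ tau * x ^ alpha * r ^ (-alpha) := by
            have hpos : 0 ≤ tau * x ^ alpha := by positivity
            exact mul_le_mul_of_nonneg_left h1 hpos
    -- now f r ≥ r / 2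
    have hrpow : r ^ (1 - alpha) = r * r ^ (-alpha) := by
      nth_rewrite 2 [show r = r ^ (1:ℝ) from (Real.rpow_one r).symm]
      rw [← Real.rpow_add hr0, sub_eq_add_neg]
    set u : ℝ := tau * x ^ alpha * r ^ (-alpha) with hu
    have hfval : f r = u * r / (1 + u) := by
      rw [hf]
      simp only [hu, hrpow]
      ring_nf
    rw [hfval, div_le_div_iff₀ two_pos (by linarith : (0:ℝ) < 1 + u)]
    nlinarith
  -- compare integrals
  have hint_half : IntegrableOn (fun r : ℝ => r / 2) (Set.Ioc x (s * x)) :=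
    (continuous_id.div_const 2).integrableOn_Ioc
  have hmono1 : ∫ r in Set.Ioc x (s * x), r / 2 ≤ ∫ r in Set.Ioc x (s * x), f r :=
    setIntegral_mono_on hint_half (hint.mono_set Set.Ioc_subset_Ioi_self) measurableSet_Ioc hptw
  have hmono2 : ∫ r in Set.Ioc x (s * x), f r ≤ ∫ r in Set.Ioi x, f r := by
    refine setIntegral_mono_set hint ?_ (HasSubset.Subset.eventuallyLE Set.Ioc_subset_Ioi_self)
    filter_upwards [ae_restrict_mem measurableSet_Ioi] with r hr
    exact K1_integrand_nonneg htau0.le hx hr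
  have hval : ∫ r in Set.Ioc x (s * x), r / 2 = ((s * x) ^ 2 - x ^ 2) / 4 := by
    rw [← intervalIntegral.integral_of_le hxsx]
    rw [intervalIntegral.integral_div, integral_id]
    ring
  have hs2 : s ^ 2 = tau ^ (2 / alpha) := by
    rw [hs, ← Real.rpow_natCast (tau ^ alpha⁻¹) 2, ← Real.rpow_mul htau0.le]
    norm_num
    rw [mul_comm]
    rfl
  have hK : x ^ 2 + 2 * (((s * x) ^ 2 - x ^ 2) / 4) ≤ K1 tau alpha x := by
    rw [K1]
    have := hval ▸ (hmono1.trans hmono2)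
    linarith
  have hfin : x ^ 2 * tau ^ (2 / alpha) / 2 ≤ x ^ 2 + 2 * (((s * x) ^ 2 - x ^ 2) / 4) := by
    rw [← hs2]
    nlinarith [sq_nonneg x, sq_nonneg (s*x)]
  exact hfin.trans hK

lemma inner_nonneg {tau alpha eta x r : ℝ} (htau : 0 ≤ tau) (heta : 0 ≤ eta) (hx : 0 ≤ x)
    {b : ℝ} :
    0 ≤ ∫ u in Set.Ioi b,
        tau * x ^ alpha * eta * (r ^ 2 + u ^ 2) ^ (-(alpha / 2)) /
          (1 + tau * x ^ alpha * eta * (r ^ 2 + u ^ 2) ^ (-(alpha / 2))) := by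
  refine setIntegral_nonneg measurableSet_Ioi fun u hu => ?_
  have h1 : 0 ≤ tau * x ^ alpha * eta * (r ^ 2 + u ^ 2) ^ (-(alpha / 2)) := by positivity
  positivity

lemma K2_nonneg {mu rho alpha eta tau x : ℝ} (hmu : 0 ≤ mu) (hrho : 0 ≤ rho)
    (htau : 0 ≤ tau) (heta : 0 ≤ eta) (hx : 0 ≤ x) : 0 ≤ K2 mu rho alpha eta tau x := by
  refine intervalIntegral.integral_nonneg hrho fun r hr => ?_
  have h1 : 0 ≤ Real.sqrt (rho ^ 2 - r ^ 2) := Real.sqrt_nonneg _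
  have h2 := inner_nonneg (r := r) (b := Real.sqrt (rho ^ 2 - r ^ 2)) htau heta hx (alpha := alpha)
  have : Real.exp (-2 * mu * Real.sqrt (rho ^ 2 - r ^ 2)
      - 2 * mu * ∫ u in Set.Ioi (Real.sqrt (rho ^ 2 - r ^ 2)),
        tau * x ^ alpha * eta * (r ^ 2 + u ^ 2) ^ (-(alpha / 2)) /
          (1 + tau * x ^ alpha * eta * (r ^ 2 + u ^ 2) ^ (-(alpha / 2)))) ≤ 1 := by
    rw [Real.exp_le_one_iff]
    nlinarith
  linarith

lemma K3_nonneg {mu rho alpha eta tau x : ℝ} (hmu : 0 ≤ mu)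
    (htau : 0 ≤ tau) (heta : 0 ≤ eta) (hx : 0 ≤ x) : 0 ≤ K3 mu rho alpha eta tau x := by
  refine setIntegral_nonneg measurableSet_Ioi fun r hr => ?_
  have h2 := inner_nonneg (r := r) (b := (0:ℝ)) htau heta hx (alpha := alpha)
  have : Real.exp (-2 * mu * ∫ u in Set.Ioi (0:ℝ),
        tau * x ^ alpha * eta * (r ^ 2 + u ^ 2) ^ (-(alpha / 2)) /
          (1 + tau * x ^ alpha * eta * (r ^ 2 + u ^ 2) ^ (-(alpha / 2)))) ≤ 1 := by
    rw [Real.exp_le_one_iff]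
    nlinarith
  linarith

lemma CDL_nonneg (lamB lamL mu rho alpha eta tau : ℝ) (hlamB : 0 ≤ lamB) :
    0 ≤ C_DL lamB lamL mu rho alpha eta tau := by
  refine setIntegral_nonneg measurableSet_Ioi fun y hy => ?_
  have hy0 : (0:ℝ) < y := hy
  positivity

lemma CDL_bound (lamB lamL mu rho alpha eta tau : ℝ) (hlamB : 0 < lamB) (hlamL : 0 < lamL)
    (hmu : 0 < mu) (hrho : 0 < rho) (heta : 0 < eta) (htau : 0 ≤ tau)
    {b : ℝ} (hb : 0 < b) (hK1 : ∀ y : ℝ, 0 < y → b * y ^ 2 ≤ K1 tau alpha y) :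
    C_DL lamB lamL mu rho alpha eta tau ≤ b⁻¹ := by
  set c : ℝ := Real.pi * lamB * b with hc
  have hc0 : 0 < c := by positivity
  have hg_int : Integrable (fun y : ℝ => 2 * Real.pi * lamB * (y * Real.exp (-c * y ^ 2))) :=
    (integrable_mul_exp_neg_mul_sq hc0).const_mul _
  have h0 : 0 ≤ᵐ[volume.restrict (Set.Ioi (0:ℝ))] fun y : ℝ =>
      2 * Real.pi * lamB * y *
        Real.exp (-(Real.pi * lamB * K1 tau alpha y) - 2 * lamL * K2 mu rho alpha eta tau y
          - 2 * lamL * K3 mu rho alpha eta tau y) := by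
    filter_upwards [ae_restrict_mem measurableSet_Ioi] with y hy
    have hy0 : (0:ℝ) < y := hy
    positivity
  have hle : (fun y : ℝ =>
      2 * Real.pi * lamB * y *
        Real.exp (-(Real.pi * lamB * K1 tau alpha y) - 2 * lamL * K2 mu rho alpha eta tau y
          - 2 * lamL * K3 mu rho alpha eta tau y))
      ≤ᵐ[volume.restrict (Set.Ioi (0:ℝ))]
      fun y : ℝ => 2 * Real.pi * lamB * (y * Real.exp (-c * y ^ 2)) := by
    filter_upwards [ae_restrict_mem measurableSet_Ioi] with y hy
    have hy0 : (0:ℝ) < y := hy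
    have hK2 : 0 ≤ K2 mu rho alpha eta tau y := K2_nonneg hmu.le hrho.le htau heta.le hy0.le
    have hK3 : 0 ≤ K3 mu rho alpha eta tau y := K3_nonneg hmu.le htau heta.le hy0.le
    have hE : -(Real.pi * lamB * K1 tau alpha y) - 2 * lamL * K2 mu rho alpha eta tau y
        - 2 * lamL * K3 mu rho alpha eta tau y ≤ -c * y ^ 2 := by
      have h1 : Real.pi * lamB * (b * y ^ 2) ≤ Real.pi * lamB * K1 tau alpha y :=
        mul_le_mul_of_nonneg_left (hK1 y hy0) (by positivity)
      nlinarith [hlamL, hK2, hK3]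
    calc 2 * Real.pi * lamB * y *
        Real.exp (-(Real.pi * lamB * K1 tau alpha y) - 2 * lamL * K2 mu rho alpha eta tau y
          - 2 * lamL * K3 mu rho alpha eta tau y)
        ≤ 2 * Real.pi * lamB * y * Real.exp (-c * y ^ 2) :=
          mul_le_mul_of_nonneg_left (Real.exp_le_exp.2 hE) (by positivity)
      _ = 2 * Real.pi * lamB * (y * Real.exp (-c * y ^ 2)) := by ring
  have hmono := integral_mono_of_nonneg h0 hg_int.integrableOn hle
  have hval : ∫ y in Set.Ioi (0:ℝ), 2 * Real.pi * lamB * (y * Real.exp (-c * y ^ 2)) = b⁻¹ := by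
    rw [integral_const_mul, gauss_val hc0, hc]
    have hpi : (0:ℝ) < Real.pi := Real.pi_pos
    field_simp
  rw [C_DL]
  calc (∫ y in Set.Ioi (0:ℝ), 2 * Real.pi * lamB * y *
        Real.exp (-(Real.pi * lamB * K1 tau alpha y) - 2 * lamL * K2 mu rho alpha eta tau y
          - 2 * lamL * K3 mu rho alpha eta tau y))
      ≤ ∫ y in Set.Ioi (0:ℝ), 2 * Real.pi * lamB * (y * Real.exp (-c * y ^ 2)) := hmono
    _ = b⁻¹ := hval

theorem mean_rate_integrable (lamB lamL mu rho alpha eta : ℝ) (hlamB : 0 < lamB) (hlamL : 0 < lamL)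
    (hmu : 0 < mu) (hrho : 0 < rho) (halpha : 2 < alpha) (heta : 0 < eta) :
    MeasureTheory.IntegrableOn
      (fun x : ℝ => C_DL lamB lamL mu rho alpha eta ((2:ℝ) ^ x - 1)) (Set.Ioi (0:ℝ)) := by
  have hmeas : Measurable (fun x : ℝ => C_DL lamB lamL mu rho alpha eta ((2:ℝ) ^ x - 1)) := by
    have h2x : Measurable (fun x : ℝ => (2:ℝ) ^ x - 1) := by
      have : (fun x : ℝ => (2:ℝ) ^ x) = fun x => Real.exp (Real.log 2 * x) :=
        funext fun x => Real.rpow_def_of_pos two_pos x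
      exact (by rw [this]; fun_prop : Measurable fun x : ℝ => (2:ℝ) ^ x).sub measurable_const
    exact (measurable_CDL lamB lamL mu rho alpha eta hrho).comp h2x
  have htau_pos : ∀ x : ℝ, 0 ≤ x → (0:ℝ) ≤ (2:ℝ) ^ x - 1 := by
    intro x hx
    have : (1:ℝ) = (2:ℝ) ^ (0:ℝ) := (Real.rpow_zero 2).symm
    have h2 : (2:ℝ) ^ (0:ℝ) ≤ (2:ℝ) ^ x :=
      Real.rpow_le_rpow_of_exponent_le one_le_two hx
    rw [Real.rpow_zero] at h2
    linarith
  have htau1 : ∀ x : ℝ, 1 ≤ x → (1:ℝ) ≤ (2:ℝ) ^ x - 1 := by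
    intro x hx
    have h2 : (2:ℝ) ^ (1:ℝ) ≤ (2:ℝ) ^ x :=
      Real.rpow_le_rpow_of_exponent_le one_le_two hx
    rw [Real.rpow_one] at h2
    linarith
  have hsplit : Set.Ioi (0:ℝ) = Set.Ioc (0:ℝ) 1 ∪ Set.Ioi (1:ℝ) :=
    (Set.Ioc_union_Ioi_eq_Ioi zero_le_one).symm
  rw [hsplit]
  refine MeasureTheory.IntegrableOn.union ?_ ?_
  · -- bounded on Ioc 0 1
    refine Measure.integrableOn_of_bounded (M := 1) (by simp) hmeas.aestronglyMeasurable ?_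
    filter_upwards [ae_restrict_mem measurableSet_Ioc] with x hx
    have htau : (0:ℝ) ≤ (2:ℝ) ^ x - 1 := htau_pos x hx.1.le
    have hb : C_DL lamB lamL mu rho alpha eta ((2:ℝ) ^ x - 1) ≤ 1 := by
      have := CDL_bound lamB lamL mu rho alpha eta ((2:ℝ) ^ x - 1) hlamB hlamL hmu hrho heta
        htau (b := 1) one_pos (fun y hy => by simpa using K1_ge_sq htau hy)
      simpa using this
    have hnn := CDL_nonneg lamB lamL mu rho alpha eta ((2:ℝ) ^ x - 1) hlamB.le
    rw [Real.norm_eq_abs, abs_of_nonneg hnn]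
    exact hb
  · -- dominated by exponential decay on Ioi 1
    set k : ℝ := 2 / alpha * Real.log 2 with hk
    have halpha0 : (0:ℝ) < alpha := by linarith
    have hk0 : 0 < k := by
      have : (0:ℝ) < Real.log 2 := Real.log_pos one_lt_two
      positivity
    have hg_int : IntegrableOn (fun x : ℝ =>
        2 * Real.exp k * Real.exp (-k * x)) (Set.Ioi (1:ℝ)) :=
      (exp_neg_integrableOn_Ioi 1 hk0).const_mul _
    refine Integrable.mono' hg_int hmeas.aestronglyMeasurable.restrict ?_
    filter_upwards [ae_restrict_mem measurableSet_Ioi] with x hx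
    have hx1 : (1:ℝ) ≤ x := (le_of_lt hx)
    set tau : ℝ := (2:ℝ) ^ x - 1 with htaud
    have htau1' : (1:ℝ) ≤ tau := htau1 x hx1
    have htau0 : (0:ℝ) < tau := lt_of_lt_of_le one_pos htau1'
    have hb2 : (0:ℝ) < tau ^ (2 / alpha) / 2 := by positivity
    have hbound := CDL_bound lamB lamL mu rho alpha eta tau hlamB hlamL hmu hrho heta
      htau0.le hb2 (fun y hy => by
        have := K1_lower htau1' halpha hy
        calc tau ^ (2 / alpha) / 2 * y ^ 2 = y ^ 2 * tau ^ (2 / alpha) / 2 := by ring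
          _ ≤ K1 tau alpha y := this)
    have hnn := CDL_nonneg lamB lamL mu rho alpha eta tau hlamB.le
    rw [Real.norm_eq_abs, abs_of_nonneg hnn]
    refine hbound.trans ?_
    -- (tau ^ (2/alpha) / 2)⁻¹ = 2 * tau ^ (-(2/alpha)) ≤ 2 * (2^(x-1))^(-(2/alpha)) = 2 e^k e^{-kx}
    have h2x : (2:ℝ) ^ (x - 1) ≤ tau := by
      have e1 : (2:ℝ) ^ x = (2:ℝ) ^ (x - 1) * 2 := by
        rw [← Real.rpow_add_one (by norm_num : (2:ℝ) ≠ 0) (x - 1)]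
        norm_num
      have e2 : (1:ℝ) ≤ (2:ℝ) ^ (x - 1) := by
        have := Real.rpow_le_rpow_of_exponent_le one_le_two (by linarith : (0:ℝ) ≤ x - 1)
        rw [Real.rpow_zero] at this
        linarith [Real.rpow_le_rpow_of_exponent_le (one_le_two (α := ℝ))
          (by linarith : (0:ℝ) ≤ x - 1)]
      rw [htaud, e1]
      nlinarith
    have h2x0 : (0:ℝ) < (2:ℝ) ^ (x - 1) := Real.rpow_pos_of_pos two_pos _
    have hmono2 : tau ^ (-(2 / alpha)) ≤ ((2:ℝ) ^ (x - 1)) ^ (-(2 / alpha)) :=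
      Real.rpow_le_rpow_of_nonpos h2x0 h2x (neg_nonpos.mpr (by positivity))
    have hval2 : ((2:ℝ) ^ (x - 1)) ^ (-(2 / alpha)) = Real.exp k * Real.exp (-k * x) := by
      rw [Real.rpow_def_of_pos two_pos (x - 1), ← Real.exp_log (x := ((Real.exp (Real.log 2 * (x - 1))) ^ (-(2/alpha)))) (by positivity)]
      rw [Real.log_rpow (Real.exp_pos _), Real.log_exp, ← Real.exp_add]
      congr 1
      rw [hk]
      ring
    have hinv : (tau ^ (2 / alpha) / 2)⁻¹ = 2 * tau ^ (-(2 / alpha)) := by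
      rw [Real.rpow_neg htau0.le]
      field_simp
    rw [hinv]
    calc 2 * tau ^ (-(2 / alpha)) ≤ 2 * ((2:ℝ) ^ (x - 1)) ^ (-(2 / alpha)) := by linarith
      _ = 2 * Real.exp k * Real.exp (-k * x) := by rw [hval2]; ring
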